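/- Let M = (m_ij) be a skew-symmetric or symmetric V×V matrix over a field F, let K = F² with bilinear form b⁻ if M is symmetric and b⁺ if M is skew-symmetric, and let a, b : V → K be supplementary chains (⟨a(x),a(x)⟩ = ⟨b(x),b(x)⟩ = 0 and ⟨a(x),b(x)⟩ = 1 for all x). Define f_i : V → K by f_i(j) = m_ij·a(j) for j ≠ i and f_i(i) = m_ii·a(i) + b(i). Then the span N of {f_i : i ∈ V} is a totally isotropic subspace of K^V of dimension |V| (with respect to the form ⟨f,g⟩ = Σ_{x∈V} ⟨f(x),g(x)⟩_K). -/

import Mathlib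

open Matrix

variable {V : Type*} [Fintype V] [DecidableEq V] {F : Type*} [Field F]

/-- The symmetric bilinear form `b⁺((a,b),(c,d)) = ad + bc` on `K = F²`. -/
def bplus : F × F → F × F → F := fun x y => x.1 * y.2 + x.2 * y.1

/-- The skew-symmetric bilinear form `b⁻((a,b),(c,d)) = ad − bc` on `K = F²`. -/
def bminus : F × F → F × F → F := fun x y => x.1 * y.2 - x.2 * y.1

/-- Given a skew-symmetric or symmetric matrix `M` over `F` (with the bilinear
form on `K = F²` chosen to be `b⁺` in the skew-symmetric case and `b⁻` in the
symmetric case) and supplementary chains `a`, `b`, the span of the chains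
`f_i` (with `f_i(j) = m_ij a(j)` for `j ≠ i` and `f_i(i) = m_ii a(i) + b(i)`)
is a totally isotropic subspace of `K^V` of dimension `|V|`, i.e. a Lagrangian
chain-group. -/
theorem span_rows_lagrangian (M : Matrix V V F) (β : F × F → F × F → F)
    (a b : V → F × F)
    (hM : (Mᵀ = -M ∧ (∀ i, M i i = 0) ∧ β = (bplus : F × F → F × F → F)) ∨
          (Mᵀ = M ∧ β = (bminus : F × F → F × F → F)))
    (hsupp : ∀ x, β (a x) (a x) = 0 ∧ β (b x) (b x) = 0 ∧ β (a x) (b x) = 1) :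
    (∀ u ∈ Submodule.span F
        (Set.range fun i : V => fun j : V =>
          if j = i then M i i • a i + b i else M i j • a j),
      ∀ w ∈ Submodule.span F
        (Set.range fun i : V => fun j : V =>
          if j = i then M i i • a i + b i else M i j • a j),
        ∑ x, β (u x) (w x) = 0) ∧
    Module.finrank F
      (Submodule.span F
        (Set.range fun i : V => fun j : V =>
          if j = i then M i i • a i + b i else M i j • a j))
      = Fintype.card V := by
  set f : V → V → F × F := fun i j =>
    if j = i then M i i • a i + b i else M i j • a j with hf
  have hβ : β = (bplus : F × F → F × F → F) ∨ β = (bminus : F × F → F × F → F) := by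
    rcases hM with ⟨_, _, h⟩ | ⟨_, h⟩
    · exact Or.inl h
    · exact Or.inr h
  -- bilinearity lemmas
  have hadd₁ : ∀ p q x : F × F, β (p + q) x = β p x + β q x := by
    rcases hβ with rfl | rfl <;> intro p q x <;>
      simp only [bplus, bminus, Prod.fst_add, Prod.snd_add] <;> ring
  have hadd₂ : ∀ x p q : F × F, β x (p + q) = β x p + β x q := by
    rcases hβ with rfl | rfl <;> intro x p q <;>
      simp only [bplus, bminus, Prod.fst_add, Prod.snd_add] <;> ring
  have hsmul₁ : ∀ (r : F) (p x : F × F), β (r • p) x = r * β p x := by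
    rcases hβ with rfl | rfl <;> intro r p x <;>
      simp only [bplus, bminus, Prod.smul_fst, Prod.smul_snd, smul_eq_mul] <;> ring
  have hsmul₂ : ∀ (x : F × F) (r : F) (p : F × F), β x (r • p) = r * β x p := by
    rcases hβ with rfl | rfl <;> intro x r p <;>
      simp only [bplus, bminus, Prod.smul_fst, Prod.smul_snd, smul_eq_mul] <;> ring
  have hzero₁ : ∀ x : F × F, β 0 x = 0 := by
    rcases hβ with rfl | rfl <;> intro x <;>
      simp [bplus, bminus]
  have hzero₂ : ∀ x : F × F, β x 0 = 0 := by
    rcases hβ with rfl | rfl <;> intro x <;>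
      simp [bplus, bminus]
  -- main expansion lemma
  have hexpand : ∀ (j : V) (r s t u : F),
      β (r • a j + s • b j) (t • a j + u • b j) = r * u + s * t * β (b j) (a j) := by
    intro j r s t u
    obtain ⟨h1, h2, h3⟩ := hsupp j
    rcases hβ with rfl | rfl <;>
      simp only [bplus, bminus, Prod.fst_add, Prod.snd_add, Prod.smul_fst,
        Prod.smul_snd, smul_eq_mul] at h1 h2 h3 ⊢ <;>
      linear_combination r * t * h1 + s * u * h2 + r * u * h3
  have hfeq : ∀ i j, f i j = M i j • a j + (if j = i then (1 : F) else 0) • b j := by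
    intro i j
    by_cases h : j = i
    · subst h; simp [hf]
    · simp [hf, h]
  -- orthogonality of the generators
  have horth : ∀ i k, ∑ j, β (f i j) (f k j) = 0 := by
    intro i k
    have hsum : ∑ j, β (f i j) (f k j)
        = M i k + M k i * β (b i) (a i) := by
      have : ∀ j, β (f i j) (f k j)
          = M i j * (if j = k then (1 : F) else 0)
            + (if j = i then (1 : F) else 0) * M k j * β (b j) (a j) := by
        intro j
        rw [hfeq i j, hfeq k j, hexpand]
      rw [Finset.sum_congr rfl fun j _ => this j, Finset.sum_add_distrib]
      simp [mul_ite, ite_mul, Finset.sum_ite_eq']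
    rcases hM with ⟨hskew, hdiag, rfl⟩ | ⟨hsymm, rfl⟩
    · have hki : M k i = - M i k := by
        have := congrFun (congrFun hskew i) k
        simpa [Matrix.transpose_apply] using this
      have hba : bplus (b i) (a i) = 1 := by
        have h3 := (hsupp i).2.2
        simp only [bplus] at h3 ⊢
        linear_combination h3
      rw [hsum, hki, hba]; ring
    · have hki : M k i = M i k := by
        have := congrFun (congrFun hsymm i) k
        simpa [Matrix.transpose_apply] using this
      have hba : bminus (b i) (a i) = -1 := by
        have h3 := (hsupp i).2.2
        simp only [bminus] at h3 ⊢
        linear_combination -h3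
      rw [hsum, hki, hba]; ring
  constructor
  · intro u hu
    induction hu using Submodule.span_induction with
    | mem x hx =>
      obtain ⟨i, rfl⟩ := hx
      intro w hw
      induction hw using Submodule.span_induction with
      | mem y hy =>
        obtain ⟨k, rfl⟩ := hy
        exact horth i k
      | zero => simp [hzero₂]
      | add y z _ _ hy hz =>
        simpa [hadd₂, Finset.sum_add_distrib] using by rw [hy, hz]; ring
      | smul r y _ hy =>
        simp only [Pi.smul_apply, hsmul₂, ← Finset.mul_sum, hy, mul_zero]
    | zero => intro w hw; simp [hzero₁]
    | add y z _ _ hy hz =>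
      intro w hw
      simp only [Pi.add_apply, hadd₁, Finset.sum_add_distrib, hy w hw, hz w hw, add_zero]
    | smul r y _ hy =>
      intro w hw
      simp only [Pi.smul_apply, hsmul₁, ← Finset.mul_sum, hy w hw, mul_zero]
  · have hab : ∀ (j : V) (t u : F), β (a j) (t • a j + u • b j) = u := by
      intro j t u
      have := hexpand j 1 0 t u
      simpa using this
    have hsum₂ : ∀ (x : F × F) (s : Finset V) (v : V → F × F),
        β x (∑ i ∈ s, v i) = ∑ i ∈ s, β x (v i) := by
      intro x s v
      induction s using Finset.induction_on with
      | empty => simp [hzero₂]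
      | insert _ _ hns ih => simp [Finset.sum_insert hns, hadd₂, ih]
    have hli : LinearIndependent F f := by
      rw [Fintype.linearIndependent_iff]
      intro g hg j
      have h0 : (∑ i, g i • f i) j = 0 := by rw [hg]; rfl
      have h1 : ∑ i, g i • f i j = 0 := by
        simpa [Finset.sum_apply] using h0
      have h2 : β (a j) (∑ i, g i • f i j) = 0 := by rw [h1, hzero₂]
      rw [hsum₂] at h2
      have h3 : ∀ i, β (a j) (g i • f i j) = g i * (if j = i then (1 : F) else 0) := by
        intro i
        rw [hsmul₂, hfeq i j, hab]
      rw [Finset.sum_congr rfl fun i _ => h3 i] at h2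
      simpa [mul_ite, Finset.sum_ite_eq] using h2
    exact finrank_span_eq_card hli
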